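/- Let G be a Grothendieck category with a projective generator, let (X,Y) be a cotorsion pair of chain complexes in Ch(G), and let C be a class of objects of G. If the sphere complexes S^n(C) belong to X for every C ∈ C and every n ∈ ℤ, then every bounded below chain complex all of whose entries lie in C also belongs to X. -/

import Mathlib

set_option linter.unusedVariables false

open CategoryTheory CategoryTheory.Limits ZeroObject

universe v u

namespace GorensteinAC





/-! ### General notions in an abelian category -/

section AbelianNotions

variable {𝒜 : Type u} [Category.{v} 𝒜] [Abelian 𝒜]

/-- `Ext¹(X,Y) = 0`, expressed by the (Yoneda) condition that every short exact
sequence `0 → Y → Z → X → 0` splits. -/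
def Ext1IsZero (X Y : 𝒜) : Prop :=
  ∀ (Z : 𝒜) (i : Y ⟶ Z) (p : Z ⟶ X) (w : i ≫ p = 0),
    (ShortComplex.mk i p w).ShortExact → ∃ s : X ⟶ Z, s ≫ p = 𝟙 X

/-- The right `Ext¹`-orthogonal of a class of objects. -/
def rightPerp (S : Set 𝒜) : Set 𝒜 := {Y | ∀ X ∈ S, Ext1IsZero X Y}

/-- The left `Ext¹`-orthogonal of a class of objects. -/
def leftPerp (S : Set 𝒜) : Set 𝒜 := {X | ∀ Y ∈ S, Ext1IsZero X Y}

/-- `(X, Y)` is a cotorsion pair. -/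
def IsCotorsionPair (X Y : Set 𝒜) : Prop := Y = rightPerp X ∧ X = leftPerp Y

/-- `(X, Y)` is a complete cotorsion pair: it is a cotorsion pair with enough
projectives and enough injectives. -/
def IsCompleteCotorsionPair (X Y : Set 𝒜) : Prop :=
  IsCotorsionPair X Y ∧
  (∀ A : 𝒜, ∃ (Y' X' : 𝒜) (i : Y' ⟶ X') (p : X' ⟶ A) (w : i ≫ p = 0),
    (ShortComplex.mk i p w).ShortExact ∧ X' ∈ X ∧ Y' ∈ Y) ∧
  (∀ A : 𝒜, ∃ (Y' X' : 𝒜) (i : A ⟶ Y') (p : Y' ⟶ X') (w : i ≫ p = 0),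
    (ShortComplex.mk i p w).ShortExact ∧ X' ∈ X ∧ Y' ∈ Y)

/-- A class is thick if it is closed under direct summands (retracts) and satisfies
the two-out-of-three property on short exact sequences. -/
def IsThick (W : Set 𝒜) : Prop :=
  (∀ A B : 𝒜, (∃ (s : A ⟶ B) (r : B ⟶ A), s ≫ r = 𝟙 A) → B ∈ W → A ∈ W) ∧
  (∀ S : ShortComplex 𝒜, S.ShortExact →
    ((S.X₁ ∈ W → S.X₂ ∈ W → S.X₃ ∈ W) ∧ (S.X₁ ∈ W → S.X₃ ∈ W → S.X₂ ∈ W) ∧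
      (S.X₂ ∈ W → S.X₃ ∈ W → S.X₁ ∈ W)))

/-- A projective cotorsion pair: a complete cotorsion pair `(C, W)` with `W` thick
and `C ∩ W` exactly the class of projective objects. -/
def IsProjectiveCotorsionPair (C W : Set 𝒜) : Prop :=
  IsCompleteCotorsionPair C W ∧ IsThick W ∧ (C ∩ W = {P : 𝒜 | Projective P})

/-- The sphere complex `S^n(A)`: `A` concentrated in degree `n`. -/
noncomputable def sphere (n : ℤ) (A : 𝒜) : ChainComplex 𝒜 ℤ :=
  (HomologicalComplex.single 𝒜 (ComplexShape.down ℤ) n).obj A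

/-- The disk complex `D^n(A)`: `A` in degrees `n` and `n-1` with identity differential. -/
noncomputable def disk (n : ℤ) (A : 𝒜) : ChainComplex 𝒜 ℤ where
  X i := if i = n ∨ i = n - 1 then A else 0
  d i j :=
    if h : i = n ∧ j = n - 1 then
      eqToHom (by (try dsimp only); rw [if_pos (Or.inl h.1), if_pos (Or.inr h.2)])
    else 0
  shape i j hij := by
    apply dif_neg
    rintro ⟨rfl, rfl⟩
    exact hij (by simp only [ComplexShape.down_Rel]; omega)
  d_comp_d' i j k hij hjk := by
    (try dsimp only)
    by_cases h : i = n ∧ j = n - 1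
    · rw [dif_neg (show ¬(j = n ∧ k = n - 1) by rintro ⟨rfl, -⟩; omega), comp_zero]
    · rw [dif_neg h, zero_comp]

end AbelianNotions






section AbelianNotionsB
variable {𝒜 : Type u} [Category.{v} 𝒜] [Abelian 𝒜]

/-- The complex `𝔻` remains exact after applying the contravariant functor `Hom(-, L)`. -/
def HomIntoExact (𝔻 : ChainComplex 𝒜 ℤ) (L : 𝒜) : Prop :=
  ∀ (n : ℤ) (f : 𝔻.X n ⟶ L), 𝔻.d (n + 1) n ≫ f = 0 →
    ∃ g : 𝔻.X (n - 1) ⟶ L, f = 𝔻.d n (n - 1) ≫ g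

/-- The complex `𝔻` remains exact after applying the covariant functor `Hom(A, -)`. -/
def HomFromExact (𝔻 : ChainComplex 𝒜 ℤ) (A : 𝒜) : Prop :=
  ∀ (n : ℤ) (f : A ⟶ 𝔻.X n), f ≫ 𝔻.d n (n - 1) = 0 →
    ∃ g : A ⟶ 𝔻.X (n + 1), f = g ≫ 𝔻.d (n + 1) n

end AbelianNotionsB

abbrev Ch (R : Type) [Ring R] := ChainComplex (ModuleCat R) ℤ
abbrev DCh (R : Type) [Ring R] := ChainComplex (Ch R) ℤ

def IsTypeFPInfty {S : Type} [Ring S] (F : ModuleCat S) : Prop :=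
  ∃ P : ProjectiveResolution F, ∀ n : ℕ, Module.Finite S (P.complex.X n)

/-- A module is countably generated if it has a countable generating set. -/
def IsCountablyGenerated {S : Type} [Ring S] (M : ModuleCat S) : Prop :=
  ∃ s : Set M, s.Countable ∧ Submodule.span S s = ⊤

/-- A chain complex is countably generated iff each component is countably generated. -/
def IsCountablyGeneratedCx {S : Type} [Ring S] (X : ChainComplex (ModuleCat S) ℤ) : Prop :=
  ∀ n : ℤ, IsCountablyGenerated (X.X n)

/-- A module `M` has projective dimension at most `n` : it admits a projective
resolution vanishing above degree `n`. -/
def HasProjDimLE {S : Type} [Ring S] (M : ModuleCat S) (n : ℕ) : Prop :=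
  ∃ P : ProjectiveResolution M, ∀ k : ℕ, n < k → IsZero (P.complex.X k)

/-- A module is absolutely pure (FP-injective) if `Ext¹(F, E) = 0` for every finitely
presented module `F`. -/
def IsAbsolutelyPure {S : Type} [Ring S] (E : ModuleCat S) : Prop :=
  ∀ F : ModuleCat S, Module.FinitePresentation S F → Ext1IsZero F E

/-- A module is absolutely clean if `Ext¹(F, A) = 0` for every module `F` of type `FP_∞`. -/
def IsAbsolutelyClean {S : Type} [Ring S] (A : ModuleCat S) : Prop :=
  ∀ F : ModuleCat S, IsTypeFPInfty F → Ext1IsZero F A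

/-- `M` has absolutely pure (FP-injective) dimension at most `n` : there is an exact
sequence `0 → M → E⁰ → ⋯ → Eⁿ → 0` with each `Eⁱ` absolutely pure. -/
def HasAbsPureDimLE {S : Type} [Ring S] (M : ModuleCat S) (n : ℕ) : Prop :=
  ∃ D : CochainComplex (ModuleCat S) ℕ,
    Nonempty (D.X 0 ≅ M) ∧ (∀ i : ℕ, D.ExactAt i) ∧
      (∀ i : ℕ, 1 ≤ i → IsAbsolutelyPure (D.X i)) ∧ (∀ i : ℕ, n + 1 < i → IsZero (D.X i))

section Coherent
variable (R : Type) [Ring R]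

/-- `R` is left coherent: every finitely generated left ideal is finitely presented. -/
def IsLeftCoherent : Prop :=
  ∀ I : Ideal R, I.FG → Module.FinitePresentation R I

/-- `R` is right coherent: every finitely generated right ideal is finitely presented. -/
def IsRightCoherent : Prop :=
  ∀ I : Submodule Rᵐᵒᵖ R, I.FG → Module.FinitePresentation Rᵐᵒᵖ I

/-- A Ding-Chen ring: a two-sided coherent ring with finite self-FP-injective dimension
on both sides. -/
def IsDingChen : Prop :=
  IsLeftCoherent R ∧ IsRightCoherent R ∧
    (∃ n : ℕ, HasAbsPureDimLE (ModuleCat.of R R) n) ∧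
    ∃ n : ℕ, HasAbsPureDimLE (ModuleCat.of Rᵐᵒᵖ Rᵐᵒᵖ) n

end Coherent

section Modules
variable {R : Type} [Ring R]

open TensorProduct in
noncomputable def ncRel (R : Type) [Ring R] (M : Type) [AddCommGroup M] [Module Rᵐᵒᵖ M]
    (N : Type) [AddCommGroup N] [Module R N] : AddSubgroup (TensorProduct ℤ M N) :=
  AddSubgroup.closure
    {z | ∃ (r : R) (m : M) (n : N),
      z = (MulOpposite.op r • m) ⊗ₜ[ℤ] n - m ⊗ₜ[ℤ] (r • n)}

def IsLevel (L : ModuleCat R) : Prop :=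
  ∀ (K P F : ModuleCat Rᵐᵒᵖ) (i : K ⟶ P) (p : P ⟶ F) (w : i ≫ p = 0),
    (ShortComplex.mk i p w).ShortExact → Projective P → IsTypeFPInfty F →
    ∀ z : TensorProduct ℤ K L,
      TensorProduct.map i.hom.toAddMonoidHom.toIntLinearMap (LinearMap.id (R := ℤ) (M := L)) z
        ∈ ncRel R P L → z ∈ ncRel R K L

/-- A module `L` is flat if for every monomorphism `K → P` of right modules, the
induced map `K ⊗_R L → P ⊗_R L` is injective. -/
def IsFlat (L : ModuleCat R) : Prop :=
  ∀ (K P : ModuleCat Rᵐᵒᵖ) (i : K ⟶ P), Mono i →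
    ∀ z : TensorProduct ℤ K L,
      TensorProduct.map i.hom.toAddMonoidHom.toIntLinearMap (LinearMap.id (R := ℤ) (M := L)) z
        ∈ ncRel R P L → z ∈ ncRel R K L

/-- `M` has flat dimension at most `n` : there is an exact sequence
`0 → Fₙ → ⋯ → F₀ → M → 0` with each `Fᵢ` flat. -/
def HasFlatDimLE (M : ModuleCat R) (n : ℕ) : Prop :=
  ∃ D : ChainComplex (ModuleCat R) ℕ,
    Nonempty (D.X 0 ≅ M) ∧ (∀ i : ℕ, D.ExactAt i) ∧
      (∀ i : ℕ, 1 ≤ i → IsFlat (D.X i)) ∧ (∀ i : ℕ, n + 1 < i → IsZero (D.X i))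

/-- A Gorenstein projective module: a cycle of an exact complex of projective modules
which remains exact under `Hom(-, Q)` for every projective module `Q`. -/
noncomputable def IsGorProjMod (M : ModuleCat R) : Prop :=
  ∃ D : ChainComplex (ModuleCat R) ℤ,
    (∀ n : ℤ, Projective (D.X n)) ∧ (∀ n : ℤ, D.ExactAt n) ∧
      (∀ Q : ModuleCat R, Projective Q → HomIntoExact D Q) ∧
      Nonempty (M ≅ kernel (D.d 0 (-1)))

/-- A Gorenstein injective module: a cycle of an exact complex of injective modules
which remains exact under `Hom(E, -)` for every injective module `E`. -/
noncomputable def IsGorInjMod (M : ModuleCat R) : Prop :=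
  ∃ D : ChainComplex (ModuleCat R) ℤ,
    (∀ n : ℤ, Injective (D.X n)) ∧ (∀ n : ℤ, D.ExactAt n) ∧
      (∀ E : ModuleCat R, Injective E → HomFromExact D E) ∧
      Nonempty (M ≅ kernel (D.d 0 (-1)))

end Modules

section Complexes
variable {R : Type} [Ring R]

def IsLevelComplex (L : Ch R) : Prop :=
  (∀ n : ℤ, L.ExactAt n) ∧ ∀ n : ℤ, IsLevel (L.cycles n)

/-- A flat chain complex: exact with all cycle modules flat. -/
def IsFlatComplex (F : Ch R) : Prop :=
  (∀ n : ℤ, F.ExactAt n) ∧ ∀ n : ℤ, IsFlat (F.cycles n)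

/-- An absolutely clean chain complex: exact with all cycle modules absolutely clean. -/
def IsAbsCleanComplex (A : Ch R) : Prop :=
  (∀ n : ℤ, A.ExactAt n) ∧ ∀ n : ℤ, IsAbsolutelyClean (A.cycles n)

def IsACAcyclicProjCx (𝔻 : DCh R) : Prop :=
  (∀ n : ℤ, Projective (𝔻.X n)) ∧ (∀ n : ℤ, 𝔻.ExactAt n) ∧
    ∀ L : Ch R, IsLevelComplex L → HomIntoExact 𝔻 L

noncomputable def IsGorACProj (X : Ch R) : Prop :=
  ∃ 𝔻 : DCh R, IsACAcyclicProjCx 𝔻 ∧ Nonempty (X ≅ kernel (𝔻.d 0 (-1)))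

/-- A Ding projective chain complex. -/
noncomputable def IsDingProjCx (X : Ch R) : Prop :=
  ∃ 𝔻 : DCh R,
    (∀ n : ℤ, Projective (𝔻.X n)) ∧ (∀ n : ℤ, 𝔻.ExactAt n) ∧
      (∀ F : Ch R, IsFlatComplex F → HomIntoExact 𝔻 F) ∧
      Nonempty (X ≅ kernel (𝔻.d 0 (-1)))

/-- A Gorenstein projective chain complex. -/
noncomputable def IsGorProjCx (X : Ch R) : Prop :=
  ∃ 𝔻 : DCh R,
    (∀ n : ℤ, Projective (𝔻.X n)) ∧ (∀ n : ℤ, 𝔻.ExactAt n) ∧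
      (∀ Q : Ch R, Projective Q → HomIntoExact 𝔻 Q) ∧
      Nonempty (X ≅ kernel (𝔻.d 0 (-1)))

/-- A Gorenstein AC-injective chain complex. -/
noncomputable def IsGorACInj (X : Ch R) : Prop :=
  ∃ 𝕀 : DCh R,
    (∀ n : ℤ, Injective (𝕀.X n)) ∧ (∀ n : ℤ, 𝕀.ExactAt n) ∧
      (∀ A : Ch R, IsAbsCleanComplex A → HomFromExact 𝕀 A) ∧
      Nonempty (X ≅ kernel (𝕀.d 0 (-1)))

/-- A Gorenstein injective chain complex. -/
noncomputable def IsGorInjCx (X : Ch R) : Prop :=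
  ∃ 𝕀 : DCh R,
    (∀ n : ℤ, Injective (𝕀.X n)) ∧ (∀ n : ℤ, 𝕀.ExactAt n) ∧
      (∀ E : Ch R, Injective E → HomFromExact 𝕀 E) ∧
      Nonempty (X ≅ kernel (𝕀.d 0 (-1)))

def chCard (X : Ch R) : Cardinal := Cardinal.mk (Σ n : ℤ, X.X n)

def dchCard (𝕏 : DCh R) : Cardinal := Cardinal.mk (Σ (n : ℤ) (k : ℤ), (𝕏.X n).X k)

end Complexes






variable {R : Type} [Ring R]

lemma mc_comp_apply {A B C : ModuleCat R} (f : A ⟶ B) (g : B ⟶ C) (x : A) :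
    (f ≫ g) x = g (f x) := rfl

lemma mc_zero_apply {A B : ModuleCat R} (x : A) : (0 : A ⟶ B) x = 0 := rfl

/-- A subcomplex of a chain complex of modules: a family of submodules preserved
by the differentials. -/
structure SubCx (X : Ch R) where
  N : ∀ n : ℤ, Submodule R (X.X n)
  d_mem : ∀ (i j : ℤ), ∀ x ∈ N i, X.d i j x ∈ N j

instance (X : Ch R) : LE (SubCx X) := ⟨fun Q Q' => ∀ n, Q.N n ≤ Q'.N n⟩

/-- A subcomplex, regarded as a chain complex in its own right. -/
noncomputable def SubCx.toCh {X : Ch R} (Q : SubCx X) : Ch R where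
  X n := ModuleCat.of R (Q.N n)
  d i j := ModuleCat.ofHom ((X.d i j).hom.restrict (Q.d_mem i j))
  shape i j h := by
    refine ModuleCat.hom_ext (LinearMap.ext fun x => Subtype.ext ?_)
    have h0 : X.d i j = 0 := X.shape i j h
    show X.d i j x.1 = _
    rw [h0]
    rfl
  d_comp_d' i j k _ _ := by
    refine ModuleCat.hom_ext (LinearMap.ext fun x => Subtype.ext ?_)
    have h0 : X.d j k (X.d i j x.1) = 0 := by
      rw [← mc_comp_apply, X.d_comp_d i j k, mc_zero_apply]
    exact h0

/-- The inclusion of a smaller subcomplex into a larger one. -/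
noncomputable def SubCx.incl {X : Ch R} {Q Q' : SubCx X} (h : Q ≤ Q') :
    Q.toCh ⟶ Q'.toCh where
  f n := ModuleCat.ofHom (Submodule.inclusion (h n))
  comm' i j _ := by
    refine ModuleCat.hom_ext (LinearMap.ext fun x => Subtype.ext ?_)
    rfl

/-- `M` is a transfinite extension (continuous union) of complexes from `S`. -/
noncomputable def IsTransfiniteExtension (S : Set (Ch R)) (M : Ch R) : Prop :=
  ∃ (lam : Ordinal.{0}) (Q : ∀ α : Ordinal, α ≤ lam → SubCx M)
    (mono : ∀ (α α' : Ordinal.{0}) (h : α ≤ α') (h' : α' ≤ lam), Q α (h.trans h') ≤ Q α' h'),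
    ((Q 0 (zero_le ..)).toCh ∈ S) ∧
    (∀ (α : Ordinal.{0}) (h : α < lam),
      cokernel (SubCx.incl (mono α (Order.succ α) (Order.le_succ α) (Order.succ_le_of_lt h)))
        ∈ S) ∧
    (∀ (γ : Ordinal.{0}) (h : γ ≤ lam), Order.IsSuccLimit γ →
      ∀ n : ℤ, (Q γ h).N n = ⨆ (α : Ordinal.{0}) (hα : α < γ), (Q α (hα.le.trans h)).N n) ∧
    (∀ n : ℤ, (Q lam le_rfl).N n = ⊤)






variable {R : Type} [Ring R]


/-- A sub-double-complex of a double complex `𝕏`: a family of submodules preserved by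
the inner and outer differentials. -/
structure SubDCx (𝕏 : DCh R) where
  N : ∀ (n k : ℤ), Submodule R ((𝕏.X n).X k)
  d_inner_mem : ∀ (n i j : ℤ), ∀ x ∈ N n i, (𝕏.X n).d i j x ∈ N n j
  d_outer_mem : ∀ (i j k : ℤ), ∀ x ∈ N i k, (𝕏.d i j).f k x ∈ N j k

instance (𝕏 : DCh R) : LE (SubDCx 𝕏) := ⟨fun Q Q' => ∀ n k, Q.N n k ≤ Q'.N n k⟩

/-- Row `n` of a sub-double-complex, as a chain complex. -/
noncomputable def SubDCx.row {𝕏 : DCh R} (Q : SubDCx 𝕏) (n : ℤ) : Ch R where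
  X k := ModuleCat.of R (Q.N n k)
  d i j := ModuleCat.ofHom (((𝕏.X n).d i j).hom.restrict (Q.d_inner_mem n i j))
  shape i j h := by
    refine ModuleCat.hom_ext (LinearMap.ext fun x => Subtype.ext ?_)
    show (𝕏.X n).d i j x.1 = _
    rw [(𝕏.X n).shape i j h]
    rfl
  d_comp_d' i j k _ _ := by
    refine ModuleCat.hom_ext (LinearMap.ext fun x => Subtype.ext ?_)
    have h0 : (𝕏.X n).d j k ((𝕏.X n).d i j x.1) = 0 := by
      rw [← mc_comp_apply, (𝕏.X n).d_comp_d i j k, mc_zero_apply]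
    exact h0

/-- A sub-double-complex, regarded as a double complex in its own right. -/
noncomputable def SubDCx.toDCh {𝕏 : DCh R} (Q : SubDCx 𝕏) : DCh R where
  X n := Q.row n
  d i j :=
    { f := fun k => ModuleCat.ofHom (((𝕏.d i j).f k).hom.restrict (Q.d_outer_mem i j k))
      comm' := fun a b _ => by
        refine ModuleCat.hom_ext (LinearMap.ext fun x => Subtype.ext ?_)
        have h0 := LinearMap.congr_fun (congrArg ModuleCat.Hom.hom ((𝕏.d i j).comm a b)) x.1
        exact h0 }
  shape i j h := by
    have h0 : 𝕏.d i j = 0 := 𝕏.shape i j h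
    refine HomologicalComplex.hom_ext _ _ fun k => ModuleCat.hom_ext (LinearMap.ext fun x => Subtype.ext ?_)
    show (𝕏.d i j).f k x.1 = _
    rw [h0]
    rfl
  d_comp_d' i j k _ _ := by
    refine HomologicalComplex.hom_ext _ _ fun m => ModuleCat.hom_ext (LinearMap.ext fun x => Subtype.ext ?_)
    have h0 : (𝕏.d j k).f m ((𝕏.d i j).f m x.1) = 0 := by
      have hdd := 𝕏.d_comp_d i j k
      calc (𝕏.d j k).f m ((𝕏.d i j).f m x.1) = ((𝕏.d i j ≫ 𝕏.d j k).f m) x.1 := rfl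
        _ = ((0 : 𝕏.X i ⟶ 𝕏.X k).f m) x.1 := by rw [hdd]
        _ = 0 := rfl
    exact h0


variable {R : Type} [Ring R]

/-- The inclusion of a smaller sub-double-complex into a larger one. -/
noncomputable def SubDCx.incl {𝕏 : DCh R} {Q Q' : SubDCx 𝕏} (h : Q ≤ Q') :
    Q.toDCh ⟶ Q'.toDCh where
  f n :=
    { f := fun k => ModuleCat.ofHom (Submodule.inclusion (h n k))
      comm' := fun i j _ => ModuleCat.hom_ext (LinearMap.ext fun x => Subtype.ext rfl) }
  comm' := fun i j _ =>
    HomologicalComplex.hom_ext _ _ fun k => ModuleCat.hom_ext (LinearMap.ext fun x => Subtype.ext rfl)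






section HomCx
variable {𝒜 : Type u} [Category.{v} 𝒜] [Abelian 𝒜]

/-- The degree-`n` part of the Hom-complex `Hom(X, Y)`:
families of maps `X_p ⟶ Y_{p+n}`. -/
abbrev HChain (X Y : ChainComplex 𝒜 ℤ) (n : ℤ) :=
  ∀ p : ℤ, X.X p ⟶ Y.X (p + n)

/-- The differential of the Hom-complex, `(δ f)_p = d_{p+m} ∘ f_p - (-1)^m f_{p-1} ∘ d_p`. -/
noncomputable def hδ (X Y : ChainComplex 𝒜 ℤ) (m n : ℤ) : HChain X Y m →+ HChain X Y n :=
  AddMonoidHom.mk'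
    (fun f p =>
      f p ≫ Y.d (p + m) (p + n) -
        (m.negOnePow : ℤ) •
          (X.d p (p + n - m) ≫ f (p + n - m) ≫ eqToHom (congrArg Y.X (by omega))))
    (by
      intro f g
      funext p
      simp only [Pi.add_apply, Preadditive.add_comp, Preadditive.comp_add, smul_add]
      abel)

/-- The `n`-th homology of the Hom-complex `Hom(X,Y)`, presented as
(cycles)/(boundaries). -/
noncomputable def homCxHomology (X Y : ChainComplex 𝒜 ℤ) (n : ℤ) : Type v :=
  (hδ X Y n (n - 1)).ker ⧸
    ((hδ X Y (n + 1) n).range.comap (hδ X Y n (n - 1)).ker.subtype)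

noncomputable instance (X Y : ChainComplex 𝒜 ℤ) (n : ℤ) : AddCommGroup (homCxHomology X Y n) := by
  unfold homCxHomology; infer_instance

/-- The suspension `Σⁿ Y`, with `(Σⁿ Y)_k = Y_{k-n}` and differential `(-1)ⁿ d`. -/
noncomputable def shiftC (n : ℤ) (Y : ChainComplex 𝒜 ℤ) : ChainComplex 𝒜 ℤ where
  X k := Y.X (k - n)
  d i j := (n.negOnePow : ℤ) • Y.d (i - n) (j - n)
  shape i j h := by
    (try dsimp only)
    rw [Y.shape, smul_zero]
    simp only [ComplexShape.down_Rel] at h ⊢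
    omega
  d_comp_d' i j k _ _ := by
    rw [Preadditive.zsmul_comp, Preadditive.comp_zsmul, Y.d_comp_d, smul_zero, smul_zero]

/-- The group of chain homotopy classes of chain maps, i.e. hom-groups in the
homotopy category `K(𝒜)`. -/
noncomputable def htpyClasses (Z W : ChainComplex 𝒜 ℤ) : Type v :=
  (HomotopyCategory.quotient 𝒜 (ComplexShape.down ℤ)).obj Z ⟶
    (HomotopyCategory.quotient 𝒜 (ComplexShape.down ℤ)).obj W

noncomputable instance (Z W : ChainComplex 𝒜 ℤ) : AddCommGroup (htpyClasses Z W) := by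
  unfold htpyClasses; infer_instance

/-- A degreewise split extension of `X` by `Y`. -/
structure DWExtension (X Y : ChainComplex 𝒜 ℤ) where
  Z : ChainComplex 𝒜 ℤ
  i : Y ⟶ Z
  p : Z ⟶ X
  w : i ≫ p = 0
  shortExact : (ShortComplex.mk i p w).ShortExact
  dwSplit : ∀ k : ℤ, ∃ r : Z.X k ⟶ Y.X k, i.f k ≫ r = 𝟙 (Y.X k)

/-- Equivalence of extensions (the Yoneda equivalence relation on `Ext¹`). -/
def DWExtension.equivRel {X Y : ChainComplex 𝒜 ℤ} (E E' : DWExtension X Y) : Prop :=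
  ∃ φ : E.Z ≅ E'.Z, E.i ≫ φ.hom = E'.i ∧ φ.hom ≫ E'.p = E.p

instance dwSetoid (X Y : ChainComplex 𝒜 ℤ) : Setoid (DWExtension X Y) where
  r := DWExtension.equivRel
  iseqv := by
    constructor
    · intro E
      exact ⟨Iso.refl _, by simp, by simp⟩
    · rintro E E' ⟨φ, h1, h2⟩
      refine ⟨φ.symm, ?_, ?_⟩
      · rw [← h1]; simp
      · rw [← h2]; simp
    · rintro E E' E'' ⟨φ, h1, h2⟩ ⟨ψ, h3, h4⟩
      refine ⟨φ ≪≫ ψ, ?_, ?_⟩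
      · simp [reassoc_of% h1, h3]
      · simp [h4, h2]

/-- The pointed set of equivalence classes of degreewise split extensions of `X` by `Y`;
this is `Ext¹_dw(X, Y)`. -/
def DWExtClasses (X Y : ChainComplex 𝒜 ℤ) : Type (max u v) :=
  Quotient (dwSetoid X Y)


end HomCx




/-! ### Auxiliary machinery for Statement 3 -/

section BuildSections

/-- Auxiliary recursion building partial sections. -/
noncomputable def buildAux {α : ℤ → Sort*} (Good : (∀ k, α k) → ℤ → Prop) (N : ℤ)
    (s₀ : ∀ k, α k) (h₀ : Good s₀ (N - 1))
    (step : ∀ (n : ℤ) (s : ∀ k, α k), Good s (n - 1) → α n)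
    (hstep : ∀ (n : ℤ) (s : ∀ k, α k) (h : Good s (n - 1)),
      Good (Function.update s n (step n s h)) n) :
    ∀ m : ℕ, {s : ∀ k, α k // Good s (N - 1 + m)}
  | 0 => ⟨s₀, by simpa using h₀⟩
  | (m + 1) =>
    ⟨Function.update (buildAux Good N s₀ h₀ step hstep m).1 (N + m)
        (step (N + m) (buildAux Good N s₀ h₀ step hstep m).1
          (by rw [show (N : ℤ) + (m : ℤ) - 1 = N - 1 + (m : ℤ) by omega]
              exact (buildAux Good N s₀ h₀ step hstep m).2)),
      by rw [show (N : ℤ) - 1 + ((m + 1 : ℕ) : ℤ) = (N : ℤ) + (m : ℤ) by push_cast; ring]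
         exact hstep _ _ _⟩

theorem buildAux_stable {α : ℤ → Sort*} (Good : (∀ k, α k) → ℤ → Prop) (N : ℤ)
    (s₀ : ∀ k, α k) (h₀ : Good s₀ (N - 1))
    (step : ∀ (n : ℤ) (s : ∀ k, α k), Good s (n - 1) → α n)
    (hstep : ∀ (n : ℤ) (s : ∀ k, α k) (h : Good s (n - 1)),
      Good (Function.update s n (step n s h)) n)
    (m m' : ℕ) (h : m ≤ m') :
    ∀ k : ℤ, k ≤ N - 1 + m →
      (buildAux Good N s₀ h₀ step hstep m').1 k = (buildAux Good N s₀ h₀ step hstep m).1 k := by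
  induction m', h using Nat.le_induction with
  | base => intro k _; rfl
  | succ m' hmm ih =>
    intro k hk
    simp only [buildAux]
    rw [Function.update_of_ne (by omega)]
    exact ih k hk

theorem buildSections {α : ℤ → Sort*} (Good : (∀ k, α k) → ℤ → Prop) (N : ℤ)
    (hmono : ∀ (s t : ∀ k, α k) (n : ℤ), (∀ k ≤ n, s k = t k) → Good s n → Good t n)
    (hanti : ∀ (s : ∀ k, α k) (n n' : ℤ), n ≤ n' → Good s n' → Good s n)
    (s₀ : ∀ k, α k) (h₀ : Good s₀ (N - 1))
    (hstep : ∀ (n : ℤ) (s : ∀ k, α k), Good s (n - 1) →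
      ∃ t : α n, Good (Function.update s n t) n) :
    ∃ s : ∀ k, α k, ∀ n, Good s n := by
  choose step hstepG using hstep
  refine ⟨fun k => (buildAux Good N s₀ h₀ step hstepG ((k - N).toNat + 1)).1 k, fun n => ?_⟩
  have hnm : n ≤ N - 1 + (((n - N + 1).toNat : ℕ) : ℤ) := by omega
  refine hanti _ n (N - 1 + ((n - N + 1).toNat : ℕ)) hnm ?_
  refine hmono (buildAux Good N s₀ h₀ step hstepG ((n - N + 1).toNat)).1 _ _ ?_
    (buildAux Good N s₀ h₀ step hstepG ((n - N + 1).toNat)).2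
  intro k hk
  have h1 := buildAux_stable Good N s₀ h₀ step hstepG ((n - N + 1).toNat)
    (max ((n - N + 1).toNat) ((k - N).toNat + 1)) (le_max_left _ _) k hk
  have h2 := buildAux_stable Good N s₀ h₀ step hstepG ((k - N).toNat + 1)
    (max ((n - N + 1).toNat) ((k - N).toNat + 1)) (le_max_right _ _) k (by push_cast; omega)
  exact h1.symm.trans h2

end BuildSections

section ExtCxConstruction

variable {V : Type u} [Category.{v} V] [Abelian V]
variable (Y Z W : ChainComplex V ℤ) (i : Y ⟶ Z) (p : Z ⟶ W) (n : ℤ)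
variable (ρ : Z.X (n - 1) ⟶ Y.X (n - 1))

/-- The extension complex: `Y` with `Z.X n` put in degree `n`. -/
noncomputable def extCx (hmid : Z.d n (n - 1) ≫ ρ ≫ Y.d (n - 1) (n - 1 - 1) = 0) :
    ChainComplex V ℤ where
  X k := if k = n then Z.X n else Y.X k
  d a b :=
    if hab : b + 1 = a then
      if ha : a = n then
        eqToHom (show (if a = n then Z.X n else Y.X a) = Z.X n by rw [if_pos ha]) ≫
          Z.d n (n - 1) ≫ ρ ≫
          eqToHom (show Y.X (n - 1) = (if b = n then Z.X n else Y.X b) by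
            rw [if_neg (show ¬ b = n by omega), show b = n - 1 by omega])
      else if hb : b = n then
        eqToHom (show (if a = n then Z.X n else Y.X a) = Y.X a by rw [if_neg ha]) ≫
          Y.d a n ≫ i.f n ≫
          eqToHom (show Z.X n = (if b = n then Z.X n else Y.X b) by rw [if_pos hb])
      else
        eqToHom (show (if a = n then Z.X n else Y.X a) = Y.X a by rw [if_neg ha]) ≫
          Y.d a b ≫
          eqToHom (show Y.X b = (if b = n then Z.X n else Y.X b) by rw [if_neg hb])
    else 0
  shape a b hab := by
    rw [dif_neg (by simpa using hab)]
  d_comp_d' a b c hab hbc := by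
    simp only [ComplexShape.down_Rel] at hab hbc
    rw [dif_pos hab, dif_pos hbc]
    by_cases ha : a = n
    · obtain rfl : b = a - 1 := by omega
      obtain rfl : c = a - 1 - 1 := by omega
      subst a
      rw [dif_pos rfl, dif_neg (show ¬ (n - 1 : ℤ) = n by omega),
        dif_neg (show ¬ (n - 1 - 1 : ℤ) = n by omega)]
      simp only [Category.assoc, eqToHom_trans_assoc, eqToHom_refl, Category.id_comp]
      rw [reassoc_of% hmid]
      simp
    · rw [dif_neg ha]
      by_cases hb : b = n
      · obtain rfl : c = b - 1 := by omega
        subst b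
        rw [dif_pos rfl, dif_pos rfl]
        simp only [Category.assoc, eqToHom_trans_assoc, eqToHom_refl, Category.id_comp]
        rw [reassoc_of% (i.comm n (n - 1))]
        simp
      · rw [dif_neg hb, dif_neg hb]
        by_cases hc : c = n
        · subst c
          rw [dif_pos rfl]
          simp only [Category.assoc, eqToHom_trans_assoc, eqToHom_refl, Category.id_comp]
          simp
        · rw [dif_neg hc]
          simp only [Category.assoc, eqToHom_trans_assoc, eqToHom_refl, Category.id_comp]
          simp

variable (hmid : Z.d n (n - 1) ≫ ρ ≫ Y.d (n - 1) (n - 1 - 1) = 0)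

lemma extCx_X_self : (extCx Y Z i n ρ hmid).X n = Z.X n := if_pos rfl

lemma extCx_X_ne (k : ℤ) (hk : ¬ k = n) : (extCx Y Z i n ρ hmid).X k = Y.X k := if_neg hk

lemma extCx_d_self :
    (extCx Y Z i n ρ hmid).d n (n - 1) =
      eqToHom (extCx_X_self Y Z i n ρ hmid) ≫ Z.d n (n - 1) ≫ ρ ≫
        eqToHom (extCx_X_ne Y Z i n ρ hmid (n - 1) (by omega)).symm := by
  dsimp only [extCx]
  rw [dif_pos (show (n : ℤ) - 1 + 1 = n by omega), dif_pos rfl]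

lemma extCx_d_to_self (a : ℤ) (ha : n + 1 = a) :
    (extCx Y Z i n ρ hmid).d a n =
      eqToHom (extCx_X_ne Y Z i n ρ hmid a (by omega)) ≫ Y.d a n ≫ i.f n ≫
        eqToHom (extCx_X_self Y Z i n ρ hmid).symm := by
  dsimp only [extCx]
  rw [dif_pos ha, dif_neg (show ¬ a = n by omega), dif_pos rfl]

lemma extCx_d_other (a b : ℤ) (hab : b + 1 = a) (ha : ¬ a = n) (hb : ¬ b = n) :
    (extCx Y Z i n ρ hmid).d a b =
      eqToHom (extCx_X_ne Y Z i n ρ hmid a ha) ≫ Y.d a b ≫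
        eqToHom (extCx_X_ne Y Z i n ρ hmid b hb).symm := by
  dsimp only [extCx]
  rw [dif_pos hab, dif_neg ha, dif_neg hb]

/-- The inclusion `Y ⟶ extCx`. -/
noncomputable def extI (hiρ : i.f (n - 1) ≫ ρ = 𝟙 (Y.X (n - 1))) :
    Y ⟶ extCx Y Z i n ρ hmid where
  f k :=
    if hk : k = n then
      eqToHom (by rw [hk]) ≫ i.f n ≫ eqToHom (by rw [hk, extCx_X_self])
    else
      eqToHom (extCx_X_ne Y Z i n ρ hmid k hk).symm
  comm' a b hab := by
    simp only [ComplexShape.down_Rel] at hab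
    by_cases ha : a = n
    · obtain rfl : b = a - 1 := by omega
      subst a
      rw [dif_pos rfl, dif_neg (show ¬ (n - 1 : ℤ) = n by omega),
        extCx_d_self Y Z i n ρ hmid]
      simp only [Category.assoc, eqToHom_trans_assoc, eqToHom_refl, Category.id_comp]
      rw [reassoc_of% (i.comm n (n - 1)), reassoc_of% hiρ]
    · rw [dif_neg ha]
      by_cases hb : b = n
      · subst b
        rw [dif_pos rfl, extCx_d_to_self Y Z i n ρ hmid a hab]
        simp only [Category.assoc, eqToHom_trans_assoc, eqToHom_refl, Category.id_comp]
      · rw [dif_neg hb, extCx_d_other Y Z i n ρ hmid a b hab ha hb]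
        simp only [Category.assoc, eqToHom_trans_assoc, eqToHom_refl, Category.id_comp]

lemma extI_f_self (hiρ : i.f (n - 1) ≫ ρ = 𝟙 (Y.X (n - 1))) :
    (extI Y Z i n ρ hmid hiρ).f n =
      eqToHom (rfl : Y.X n = Y.X n) ≫ i.f n ≫ eqToHom (extCx_X_self Y Z i n ρ hmid).symm := by
  dsimp only [extI]
  rw [dif_pos rfl]

lemma extI_f_ne (hiρ : i.f (n - 1) ≫ ρ = 𝟙 (Y.X (n - 1))) (k : ℤ) (hk : ¬ k = n) :
    (extI Y Z i n ρ hmid hiρ).f k = eqToHom (extCx_X_ne Y Z i n ρ hmid k hk).symm := by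
  dsimp only [extI]
  rw [dif_neg hk]

/-- The projection `extCx ⟶ S^n (W.X n)`. -/
noncomputable def extQ (wn : i.f n ≫ p.f n = 0) :
    extCx Y Z i n ρ hmid ⟶ (HomologicalComplex.single V (ComplexShape.down ℤ) n).obj (W.X n) :=
  HomologicalComplex.mkHomToSingle (eqToHom (extCx_X_self Y Z i n ρ hmid) ≫ p.f n)
    (fun a ha => by
      rw [extCx_d_to_self Y Z i n ρ hmid a (by simpa using ha)]
      simp only [Category.assoc, eqToHom_trans_assoc, eqToHom_refl, Category.id_comp]
      rw [wn]
      simp)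

lemma extQ_f_self (wn : i.f n ≫ p.f n = 0) :
    (extQ Y Z W i p n ρ hmid wn).f n =
      (eqToHom (extCx_X_self Y Z i n ρ hmid) ≫ p.f n) ≫
        (HomologicalComplex.singleObjXSelf (ComplexShape.down ℤ) n (W.X n)).inv :=
  HomologicalComplex.mkHomToSingle_f _ _

lemma extIQ_zero (hiρ : i.f (n - 1) ≫ ρ = 𝟙 (Y.X (n - 1))) (wn : i.f n ≫ p.f n = 0) :
    extI Y Z i n ρ hmid hiρ ≫ extQ Y Z W i p n ρ hmid wn = 0 := by
  apply HomologicalComplex.hom_ext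
  intro k
  by_cases hk : k = n
  · subst k
    rw [HomologicalComplex.comp_f, HomologicalComplex.zero_f,
      extI_f_self Y Z i n ρ hmid hiρ, extQ_f_self Y Z W i p n ρ hmid wn]
    simp only [Category.assoc, eqToHom_trans_assoc, eqToHom_refl, Category.id_comp]
    rw [reassoc_of% wn]
    simp
  · exact (HomologicalComplex.isZero_single_obj_X (ComplexShape.down ℤ) n (W.X n) k
      hk).eq_of_tgt _ _

lemma extSES (hiρ : i.f (n - 1) ≫ ρ = 𝟙 (Y.X (n - 1))) (wn : i.f n ≫ p.f n = 0)
    (hdn : (ShortComplex.mk (i.f n) (p.f n) wn).ShortExact) :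
    (ShortComplex.mk (extI Y Z i n ρ hmid hiρ) (extQ Y Z W i p n ρ hmid wn)
      (extIQ_zero Y Z W i p n ρ hmid hiρ wn)).ShortExact := by
  apply HomologicalComplex.shortExact_of_degreewise_shortExact
  intro k
  by_cases hk : k = n
  · subst k
    refine ShortComplex.shortExact_of_iso ?_ hdn
    refine ShortComplex.isoMk (Iso.refl _) (eqToIso (extCx_X_self Y Z i n ρ hmid).symm)
      (HomologicalComplex.singleObjXSelf (ComplexShape.down ℤ) n (W.X n)).symm ?_ ?_
    · show 𝟙 _ ≫ (extI Y Z i n ρ hmid hiρ).f n = i.f n ≫ eqToHom (extCx_X_self Y Z i n ρ hmid).symm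
      rw [extI_f_self Y Z i n ρ hmid hiρ]
      simp
    · show eqToHom (extCx_X_self Y Z i n ρ hmid).symm ≫ (extQ Y Z W i p n ρ hmid wn).f n =
        p.f n ≫ (HomologicalComplex.singleObjXSelf (ComplexShape.down ℤ) n (W.X n)).inv
      rw [extQ_f_self Y Z W i p n ρ hmid wn]
      simp
  · have hz := HomologicalComplex.isZero_single_obj_X (ComplexShape.down ℤ) n (W.X n) k hk
    have hf : (extI Y Z i n ρ hmid hiρ).f k = eqToHom (extCx_X_ne Y Z i n ρ hmid k hk).symm :=
      extI_f_ne Y Z i n ρ hmid hiρ k hk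
    refine ShortComplex.ShortExact.mk' ?_ ?_ ?_
    · rw [ShortComplex.exact_iff_epi _ (hz.eq_of_tgt _ _)]
      show Epi ((extI Y Z i n ρ hmid hiρ).f k)
      rw [hf]
      infer_instance
    · show Mono ((extI Y Z i n ρ hmid hiρ).f k)
      rw [hf]
      infer_instance
    · exact ⟨fun g h _ => hz.eq_of_src g h⟩

end ExtCxConstruction

/-- The key extension step: extending a partial section one degree further. -/
theorem sectionStep {V : Type u} [Category.{v} V] [Abelian V]
    {Y Z W : ChainComplex V ℤ} (i : Y ⟶ Z) (p : Z ⟶ W) (w : i ≫ p = 0)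
    (hse : (ShortComplex.mk i p w).ShortExact) (n : ℤ)
    (hext : Ext1IsZero (sphere n (W.X n)) Y)
    (s : W.X (n - 1) ⟶ Z.X (n - 1)) (s' : W.X (n - 1 - 1) ⟶ Z.X (n - 1 - 1))
    (hs1 : s ≫ p.f (n - 1) = 𝟙 (W.X (n - 1)))
    (hsd : s ≫ Z.d (n - 1) (n - 1 - 1) = W.d (n - 1) (n - 1 - 1) ≫ s') :
    ∃ t : W.X n ⟶ Z.X n, t ≫ p.f n = 𝟙 (W.X n) ∧
      t ≫ Z.d n (n - 1) = W.d n (n - 1) ≫ s := by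
  have wk : ∀ k, i.f k ≫ p.f k = 0 := fun k => by
    rw [← HomologicalComplex.comp_f, w, HomologicalComplex.zero_f]
  have hdse : ∀ k, (ShortComplex.mk (i.f k) (p.f k) (wk k)).ShortExact := by
    rw [HomologicalComplex.shortExact_iff_degreewise_shortExact] at hse
    intro k; exact hse k
  haveI hm1 : Mono (i.f (n - 1)) := (hdse (n - 1)).mono_f
  haveI hm2 : Mono (i.f (n - 1 - 1)) := (hdse (n - 1 - 1)).mono_f
  obtain ⟨ρ, hρ⟩ := KernelFork.IsLimit.lift' (hdse (n - 1)).fIsKernel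
    (𝟙 (Z.X (n - 1)) - p.f (n - 1) ≫ s) (by simp [hs1])
  have hρi : ρ ≫ i.f (n - 1) = 𝟙 (Z.X (n - 1)) - p.f (n - 1) ≫ s := by simpa using hρ
  have hiρ : i.f (n - 1) ≫ ρ = 𝟙 (Y.X (n - 1)) := by
    rw [← cancel_mono (i.f (n - 1)), Category.assoc, hρi]
    simp [Preadditive.comp_sub, reassoc_of% (wk (n - 1))]
  have hmid : Z.d n (n - 1) ≫ ρ ≫ Y.d (n - 1) (n - 1 - 1) = 0 := by
    rw [← cancel_mono (i.f (n - 1 - 1))]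
    simp only [Category.assoc, zero_comp]
    rw [← i.comm (n - 1) (n - 1 - 1), reassoc_of% hρi]
    simp only [Preadditive.sub_comp, Category.id_comp, Preadditive.comp_sub,
      HomologicalComplex.d_comp_d, zero_sub, neg_eq_zero, Category.assoc]
    rw [hsd, ← reassoc_of% (p.comm n (n - 1))]
    simp
  have hext' : Ext1IsZero ((HomologicalComplex.single V (ComplexShape.down ℤ) n).obj (W.X n)) Y :=
    hext
  obtain ⟨σ, hσ⟩ := hext' (extCx Y Z i n ρ hmid) (extI Y Z i n ρ hmid hiρ)
    (extQ Y Z W i p n ρ hmid (wk n)) (extIQ_zero Y Z W i p n ρ hmid hiρ (wk n))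
    (extSES Y Z W i p n ρ hmid hiρ (wk n) (hdse n))
  set t : W.X n ⟶ Z.X n :=
    (HomologicalComplex.singleObjXSelf (ComplexShape.down ℤ) n (W.X n)).inv ≫ σ.f n ≫
      eqToHom (extCx_X_self Y Z i n ρ hmid) with ht
  have hσn : σ.f n ≫ (extQ Y Z W i p n ρ hmid (wk n)).f n = 𝟙 _ := by
    rw [← HomologicalComplex.comp_f, hσ, HomologicalComplex.id_f]
  rw [extQ_f_self Y Z W i p n ρ hmid (wk n)] at hσn
  have h1 : σ.f n ≫ eqToHom (extCx_X_self Y Z i n ρ hmid) ≫ p.f n =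
      (HomologicalComplex.singleObjXSelf (ComplexShape.down ℤ) n (W.X n)).hom := by
    have h := congrArg (fun u => u ≫
      (HomologicalComplex.singleObjXSelf (ComplexShape.down ℤ) n (W.X n)).hom) hσn
    simpa [Category.assoc] using h
  have hsec : t ≫ p.f n = 𝟙 (W.X n) := by
    rw [ht]
    simp only [Category.assoc]
    rw [h1]
    simp
  have hcomm : σ.f n ≫ (extCx Y Z i n ρ hmid).d n (n - 1) = 0 := by
    have hc := σ.comm n (n - 1)
    rw [show ((HomologicalComplex.single V (ComplexShape.down ℤ) n).obj (W.X n)).d n (n - 1) = 0 from by simp, zero_comp] at hc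
    exact hc
  rw [extCx_d_self Y Z i n ρ hmid] at hcomm
  have hc2 : σ.f n ≫ eqToHom (extCx_X_self Y Z i n ρ hmid) ≫ Z.d n (n - 1) ≫ ρ = 0 := by
    have h := congrArg
      (fun u => u ≫ eqToHom (extCx_X_ne Y Z i n ρ hmid (n - 1) (by omega))) hcomm
    simpa [Category.assoc] using h
  have hc3 : t ≫ Z.d n (n - 1) ≫ ρ = 0 := by
    rw [ht]
    simp only [Category.assoc]
    rw [hc2, comp_zero]
  have hc4 : t ≫ Z.d n (n - 1) ≫ (𝟙 (Z.X (n - 1)) - p.f (n - 1) ≫ s) = 0 := by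
    rw [← hρi]
    rw [reassoc_of% hc3]
    simp
  have h5 : t ≫ Z.d n (n - 1) = t ≫ Z.d n (n - 1) ≫ p.f (n - 1) ≫ s := by
    have h := hc4
    simp only [Preadditive.comp_sub, Category.comp_id, sub_eq_zero] at h
    simpa [Category.assoc] using h
  refine ⟨t, hsec, ?_⟩
  rw [h5, ← reassoc_of% (p.comm n (n - 1)), reassoc_of% hsec]

/-- In a Grothendieck category with a projective generator, if all
spheres on objects of `C` lie in the left half `XX` of a cotorsion pair on `Ch(G)`,
then every bounded below complex with entries in `C` lies in `XX`. -/
theorem bounded_below_entries_in_left_half {G : Type u} [Category.{v} G] [Abelian G]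
    [HasColimits G] [AB5 G] (P : G) (hproj : Projective P) (hgen : IsSeparator P)
    (XX YY : Set (ChainComplex G ℤ)) (hcp : IsCotorsionPair XX YY) (C : Set G)
    (hspheres : ∀ c ∈ C, ∀ n : ℤ, sphere n c ∈ XX)
    (W : ChainComplex G ℤ) (hbdd : ∃ N : ℤ, ∀ n : ℤ, n < N → IsZero (W.X n))
    (hentries : ∀ n : ℤ, W.X n ∈ C) :
    W ∈ XX := by
  obtain ⟨N, hN⟩ := hbdd
  rw [hcp.2]
  simp only [leftPerp, Set.mem_setOf_eq]
  intro Y hY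
  unfold Ext1IsZero
  intro Z i p w hse
  have hsx : ∀ m : ℤ, Ext1IsZero (sphere m (W.X m)) Y := by
    intro m
    have hmem := hspheres (W.X m) (hentries m) m
    rw [hcp.2] at hmem
    exact hmem Y hY
  obtain ⟨s, hs⟩ := buildSections
    (α := fun k => (W.X k ⟶ Z.X k))
    (fun s n => ∀ k ≤ n, (s k ≫ p.f k = 𝟙 (W.X k)) ∧
      (s k ≫ Z.d k (k - 1) = W.d k (k - 1) ≫ s (k - 1))) N
    (fun s t n h hg k hk => by
      rw [← h k hk, ← h (k - 1) (by omega)]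
      exact hg k hk)
    (fun s n n' hnn hg k hk => hg k (le_trans hk hnn))
    (fun _ => 0)
    (fun k hk => by
      constructor
      · exact (hN k (by omega)).eq_of_src _ _
      · simp)
    (fun n s hgood => by
      obtain ⟨t, ht1, ht2⟩ := sectionStep i p w hse n (hsx n) (s (n - 1)) (s (n - 1 - 1))
        (hgood (n - 1) le_rfl).1 (hgood (n - 1) le_rfl).2
      refine ⟨t, fun k hk => ?_⟩
      rcases eq_or_lt_of_le hk with rfl | hlt
      · constructor
        · rw [Function.update_self]
          exact ht1
        · rw [Function.update_self, Function.update_of_ne (show k - 1 ≠ k by omega)]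
          exact ht2
      · constructor
        · rw [Function.update_of_ne (show k ≠ n by omega)]
          exact (hgood k (by omega)).1
        · rw [Function.update_of_ne (show k ≠ n by omega),
            Function.update_of_ne (show k - 1 ≠ n by omega)]
          exact (hgood k (by omega)).2)
  refine ⟨{ f := s, comm' := ?_ }, ?_⟩
  · intro a b hab
    simp only [ComplexShape.down_Rel] at hab
    obtain rfl : b = a - 1 := by omega
    exact (hs a a le_rfl).2
  · apply HomologicalComplex.hom_ext
    intro k
    rw [HomologicalComplex.comp_f, HomologicalComplex.id_f]
    exact (hs k k le_rfl).1

end GorensteinAC
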